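/- Let K be an algebraically closed field and let V be a 4-graded vector space over K such that dim V_{(1,1,1,1)} ≥ 2 and the components V_{(2,1,1,1)}, V_{(1,2,1,1)}, V_{(1,1,2,1)}, V_{(1,1,1,2)} are all nonzero. Then the quotient of the set of 4-graded nilpotent tuples on V by base-change equivalence is an infinite set. -/

import Mathlib

open Module

section Defs

variable {K : Type*} [Field K] {k : ℕ} {V : Type*} [AddCommGroup V] [Module K V]

/-- The `i`-th standard basis vector of `ℤ^k`. -/
def stdE (k : ℕ) (i : Fin k) : Fin k → ℤ := fun j => if j = i then 1 else 0

/-- A `k`-graded nilpotent tuple on a `k`-graded vector space: a tuple of pairwise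
commuting nilpotent endomorphisms, the `i`-th of which lowers the `i`-th degree by one. -/
def IsGradedNilTuple (grading : (Fin k → ℤ) → Submodule K V)
    (φ : Fin k → Module.End K V) : Prop :=
  (∀ i j, Commute (φ i) (φ j)) ∧ (∀ i, IsNilpotent (φ i)) ∧
    ∀ i x, (grading x).map (φ i) ≤ grading (x - stdE k i)

/-- The type of `k`-graded nilpotent tuples for a given grading. -/
def GradedNilTuple (grading : (Fin k → ℤ) → Submodule K V) :=
  { φ : Fin k → Module.End K V // IsGradedNilTuple grading φ }

/-- Base-change equivalence of graded nilpotent tuples: conjugation by a linear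
automorphism preserving every homogeneous component. -/
def BaseChangeRel (grading : (Fin k → ℤ) → Submodule K V)
    (φ ψ : GradedNilTuple grading) : Prop :=
  ∃ g : V ≃ₗ[K] V, (∀ x, (grading x).map (g : V →ₗ[K] V) = grading x) ∧
    ∀ i, ψ.1 i = (g : V →ₗ[K] V) ∘ₗ φ.1 i ∘ₗ (g.symm : V →ₗ[K] V)

/-- The shape of a graded vector space: all `s ∈ (ℤ≥1)^k` dominated by the index of
some nonzero homogeneous component. -/
def shapeOf (grading : (Fin k → ℤ) → Submodule K V) : Set (Fin k → ℤ) :=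
  {s | (∀ i, 1 ≤ s i) ∧ ∃ p : Fin k → ℤ, (∀ i, s i ≤ p i) ∧ grading p ≠ ⊥}

end Defs

/-- A `k`-graded finite-dimensional vector space over `K`: an internal direct sum
decomposition indexed by `ℤ^k`, supported on indices with all coordinates `≥ 1`. -/
structure GradedVS (K : Type*) [Field K] (k : ℕ) where
  V : Type
  [instAdd : AddCommGroup V]
  [instMod : Module K V]
  [instFin : FiniteDimensional K V]
  grading : (Fin k → ℤ) → Submodule K V
  internal : DirectSum.IsInternal grading
  supp : ∀ x : Fin k → ℤ, (∃ i, x i < 1) → grading x = ⊥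

attribute [instance] GradedVS.instAdd GradedVS.instMod GradedVS.instFin

/-- Componentwise comparison of partitions (parts beyond the length count as `0`). -/
def partLE (L L' : List ℕ) : Prop := ∀ i : ℕ, L.getD i 0 ≤ L'.getD i 0

/-- The flat 3-dimensional Young diagram encoded by a pair of partitions with equal
first parts: `{(i,1,j) : 1 ≤ j ≤ λ_i} ∪ {(1,i,j) : 1 ≤ j ≤ μ_i}`. -/
def FlatDiagram (L M : List ℕ) : Set (Fin 3 → ℤ) :=
  {s | (s 1 = 1 ∧ 1 ≤ s 0 ∧ 1 ≤ s 2 ∧ s 0 ≤ (L.length : ℤ) ∧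
          s 2 ≤ (L.getD ((s 0).toNat - 1) 0 : ℤ)) ∨
       (s 0 = 1 ∧ 1 ≤ s 1 ∧ 1 ≤ s 2 ∧ s 1 ≤ (M.length : ℤ) ∧
          s 2 ≤ (M.getD ((s 1).toNat - 1) 0 : ℤ))}

/-- A `k`-dimensional Young diagram: a finite, downward-closed subset of `(ℤ≥1)^k`. -/
def IsYoungDiagram {k : ℕ} (Λ : Set (Fin k → ℤ)) : Prop :=
  Λ.Finite ∧ (∀ x ∈ Λ, ∀ i, 1 ≤ x i) ∧
    ∀ x ∈ Λ, ∀ y : Fin k → ℤ, (∀ i, 1 ≤ y i) → (∀ i, y i ≤ x i) → y ∈ Λ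

/-- A 3-dimensional Young diagram is flat if, after permuting coordinates, every point
has a `1` in one of two fixed coordinate directions. -/
def IsFlat (Λ : Set (Fin 3 → ℤ)) : Prop :=
  ∃ i j : Fin 3, i ≠ j ∧ ∀ x ∈ Λ, x i = 1 ∨ x j = 1

/-- The Young diagram `Y(λ) ⊆ (ℤ≥1)²` of a partition given as a list. -/
def YoungSet (L : List ℕ) : Set (Fin 2 → ℤ) :=
  {s | 1 ≤ s 0 ∧ 1 ≤ s 1 ∧ s 0 ≤ (L.length : ℤ) ∧
       s 1 ≤ (L.getD ((s 0).toNat - 1) 0 : ℤ)}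


section AuxStmt6

variable {K : Type*} [Field K] {V : Type*} [AddCommGroup V] [Module K V]

lemma aux6_exists_dual_one (v : V) (hv : v ≠ 0) : ∃ ℓ : Module.Dual K V, ℓ v = 1 := by
  have h : ¬ ∀ φ : Module.Dual K V, φ v = 0 := by
    rw [Module.forall_dual_apply_eq_zero_iff]; exact hv
  push_neg at h
  obtain ⟨φ, hφ⟩ := h
  exact ⟨(φ v)⁻¹ • φ, by simp [inv_mul_cancel₀ hφ]⟩

lemma aux6_equiv {k : ℕ} (grading : (Fin k → ℤ) → Submodule K V) :
    Equivalence (BaseChangeRel grading) := by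
  constructor
  · intro φ
    refine ⟨LinearEquiv.refl K V, fun x => ?_, fun i => ?_⟩
    · simp [Submodule.map_id]
    · ext z; simp
  · rintro φ ψ ⟨g, hg, hc⟩
    refine ⟨g.symm, fun x => ?_, fun i => ?_⟩
    · have h2 := Submodule.map_comp (g : V →ₗ[K] V) (g.symm : V →ₗ[K] V) (grading x)
      have h3 : ((g.symm : V →ₗ[K] V).comp (g : V →ₗ[K] V)) = LinearMap.id := by
        ext z; simp
      rw [h3, Submodule.map_id, hg x] at h2
      exact h2.symm
    · ext z; rw [hc i]; simp
  · rintro φ ψ χ ⟨g1, hg1, hc1⟩ ⟨g2, hg2, hc2⟩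
    refine ⟨g1.trans g2, fun x => ?_, fun i => ?_⟩
    · have : ((g1.trans g2 : V ≃ₗ[K] V) : V →ₗ[K] V)
          = (g2 : V →ₗ[K] V).comp (g1 : V →ₗ[K] V) := rfl
      rw [this, Submodule.map_comp, hg1, hg2]
    · ext z; rw [hc2 i, hc1 i]; simp

end AuxStmt6

/-- a 4-graded vector space whose dimension vector dominates the
minimal nullroot of `D̃₄` (entry 2 at `(1,1,1,1)`, entries 1 at its four
neighbours) has infinitely many 4-graded nilpotent tuples up to base change. -/
theorem statement6 (K : Type*) [Field K] [IsAlgClosed K] (W : GradedVS K 4)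
    (h0 : 2 ≤ Module.finrank K (W.grading ![1, 1, 1, 1]))
    (h1 : W.grading ![2, 1, 1, 1] ≠ ⊥) (h2 : W.grading ![1, 2, 1, 1] ≠ ⊥)
    (h3 : W.grading ![1, 1, 2, 1] ≠ ⊥) (h4 : W.grading ![1, 1, 1, 2] ≠ ⊥) :
    Infinite (Quot (BaseChangeRel W.grading)) := by
  classical
  letI : DirectSum.Decomposition W.grading := W.internal.chooseDecomposition
  set V := W.V with hV
  -- the four special degrees
  set X : Fin 4 → (Fin 4 → ℤ) :=
    ![![2, 1, 1, 1], ![1, 2, 1, 1], ![1, 1, 2, 1], ![1, 1, 1, 2]] with hX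
  set one : Fin 4 → ℤ := ![1, 1, 1, 1] with hone
  have hXsub : ∀ i : Fin 4, X i - stdE 4 i = one := by decide
  have hXone : ∀ i : Fin 4, one ≠ X i := by decide
  -- nonzero vectors in the four neighbour components
  have hu : ∀ i : Fin 4, ∃ u : V, u ∈ W.grading (X i) ∧ u ≠ 0 := by
    intro i
    fin_cases i
    · exact (Submodule.ne_bot_iff _).mp h1
    · exact (Submodule.ne_bot_iff _).mp h2
    · exact (Submodule.ne_bot_iff _).mp h3
    · exact (Submodule.ne_bot_iff _).mp h4
  choose u humem hune using hu
  -- functionals supported on the respective component, taking value 1 at `u i`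
  have hl : ∀ i : Fin 4, ∃ ℓ : V →ₗ[K] K, ℓ (u i) = 1 ∧
      ∀ y : Fin 4 → ℤ, y ≠ X i → ∀ z ∈ W.grading y, ℓ z = 0 := by
    intro i
    have hnz : (⟨u i, humem i⟩ : W.grading (X i)) ≠ 0 := by
      intro h
      exact hune i (congrArg Subtype.val h)
    obtain ⟨f, hf⟩ := aux6_exists_dual_one (K := K) _ hnz
    refine ⟨f.comp ((DirectSum.component K (Fin 4 → ℤ) (fun x => W.grading x) (X i)).comp
      (DirectSum.decomposeLinearEquiv W.grading).toLinearMap), ?_, ?_⟩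
    · have hd : DirectSum.decompose W.grading (u i) (X i) = ⟨u i, humem i⟩ := by
        apply Subtype.ext
        exact DirectSum.decompose_of_mem_same W.grading (humem i)
      simpa [← DirectSum.apply_eq_component, DirectSum.decomposeLinearEquiv_apply, hd] using hf
    · intro y hy z hz
      have : DirectSum.decompose W.grading z (X i) = 0 := by
        apply Subtype.ext
        simpa using DirectSum.decompose_of_mem_ne W.grading hz hy
      simp [← DirectSum.apply_eq_component, DirectSum.decomposeLinearEquiv_apply, this]
  choose ℓ hℓ1 hℓ0 using hl
  -- two linearly independent vectors in the middle component
  obtain ⟨b, hb⟩ := exists_linearIndependent_of_le_finrank (R := K)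
    (M := W.grading one) h0
  set v : V := (b 0 : V) with hv
  set w : V := (b 1 : V) with hw
  have hbV : LinearIndependent K (fun i : Fin 2 => (b i : V)) :=
    hb.map' (W.grading one).subtype (Submodule.ker_subtype _)
  have hpair : ∀ s t : K, s • v + t • w = 0 → s = 0 ∧ t = 0 := by
    intro s t hst
    have h2 : LinearIndependent K ![v, w] := by
      have : ![v, w] = fun i : Fin 2 => (b i : V) := by
        ext i; fin_cases i <;> rfl
      rw [this]; exact hbV
    exact LinearIndependent.pair_iff.mp h2 s t hst
  have hv0 : v ≠ 0 := hbV.ne_zero 0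
  have hvm : v ∈ W.grading one := (b 0).2
  have hwm : w ∈ W.grading one := (b 1).2
  -- the targets
  set T : K → Fin 4 → V := fun t => ![v, w, v + w, v + t • w] with hT
  have hTmem : ∀ t i, T t i ∈ W.grading one := by
    intro t i
    fin_cases i
    · exact hvm
    · exact hwm
    · exact add_mem hvm hwm
    · exact add_mem hvm (Submodule.smul_mem _ _ hwm)
  -- the tuples
  set Φ : K → Fin 4 → Module.End K V := fun t i => (ℓ i).smulRight (T t i) with hΦ
  have hΦapply : ∀ t i z, Φ t i z = ℓ i z • T t i := fun _ _ _ => rfl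
  have hΦzero : ∀ t s : K, ∀ i j, Φ t i ∘ₗ Φ s j = 0 := by
    intro t s i j
    ext z
    have : ℓ i (ℓ j z • T s j) = ℓ j z * ℓ i (T s j) := by simp
    have h0' : ℓ i (T s j) = 0 := hℓ0 i one (hXone i) _ (hTmem s j)
    simp [hΦapply, this, h0']
  have hΦtuple : ∀ t : K, IsGradedNilTuple W.grading (Φ t) := by
    intro t
    refine ⟨fun i j => ?_, fun i => ⟨2, ?_⟩, fun i x => ?_⟩
    · unfold Commute SemiconjBy
      have e1 : Φ t i * Φ t j = 0 := hΦzero t t i j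
      have e2 : Φ t j * Φ t i = 0 := hΦzero t t j i
      rw [e1, e2]
    · have : Φ t i ^ 2 = Φ t i * Φ t i := sq (Φ t i)
      rw [this]
      exact hΦzero t t i i
    · rintro z ⟨y, hy, rfl⟩
      by_cases hx : x = X i
      · subst hx
        rw [hXsub i]
        exact Submodule.smul_mem _ _ (hTmem t i)
      · have : ℓ i y = 0 := hℓ0 i x hx y hy
        rw [hΦapply, this, zero_smul]
        exact zero_mem _
  -- the family of classes
  set F : K → Quot (BaseChangeRel W.grading) :=
    fun t => Quot.mk _ ⟨Φ t, hΦtuple t⟩ with hF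
  have hinj : Function.Injective F := by
    intro t t' heq
    have hrel : BaseChangeRel W.grading ⟨Φ t, hΦtuple t⟩ ⟨Φ t', hΦtuple t'⟩ :=
      ((aux6_equiv W.grading).eqvGen_iff).mp (Quot.eq.mp heq)
    obtain ⟨g, hg, hc⟩ := hrel
    -- g maps each grading component into itself
    have hgmem : ∀ x z, z ∈ W.grading x → (g : V →ₗ[K] V) z ∈ W.grading x := by
      intro x z hz
      rw [← hg x]
      exact Submodule.mem_map_of_mem hz
    set c : Fin 4 → K := fun i => ℓ i ((g : V →ₗ[K] V) (u i)) with hcdef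
    have key : ∀ i, (g : V →ₗ[K] V) (T t i) = c i • T t' i := by
      intro i
      have := congrArg (fun f : Module.End K V => f ((g : V →ₗ[K] V) (u i))) (hc i)
      simp only [LinearMap.comp_apply, LinearEquiv.coe_coe,
        LinearEquiv.symm_apply_apply] at this
      rw [hΦapply, hΦapply, hℓ1 i, one_smul] at this
      exact this.symm
    have k0 := key 0
    have k1 := key 1
    have k2 := key 2
    have k3 := key 3
    have hT0 : ∀ s : K, T s 0 = v := fun _ => rfl
    have hT1 : ∀ s : K, T s 1 = w := fun _ => rfl
    have hT2 : ∀ s : K, T s 2 = v + w := fun _ => rfl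
    have hT3 : ∀ s : K, T s 3 = v + s • w := fun _ => rfl
    rw [hT0, hT0] at k0
    rw [hT1, hT1] at k1
    rw [hT2, hT2] at k2
    rw [hT3, hT3] at k3
    -- from k2 : g v + g w = c2 v + c2 w
    have e2 : (c 0 - c 2) • v + (c 1 - c 2) • w = 0 := by
      have : c 0 • v + c 1 • w = c 2 • v + c 2 • w := by
        rw [← k0, ← k1, ← map_add, k2, smul_add]
      rw [sub_smul, sub_smul]
      linear_combination (norm := module) this
    obtain ⟨e20, e21⟩ := hpair _ _ e2
    have hc02 : c 0 = c 2 := sub_eq_zero.mp e20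
    have hc12 : c 1 = c 2 := sub_eq_zero.mp e21
    -- from k3 : g v + t • g w = c3 v + (c3 * t') w
    have e3 : (c 0 - c 3) • v + (t * c 1 - c 3 * t') • w = 0 := by
      have lhs : (g : W.V →ₗ[K] W.V) (v + t • w) = c 0 • v + (t * c 1) • w := by
        rw [map_add, map_smul, k0, k1, smul_smul]
      have rhs : (g : W.V →ₗ[K] W.V) (v + t • w) = c 3 • v + (c 3 * t') • w := by
        rw [k3, smul_add, smul_smul]
      have h' : c 0 • v + (t * c 1) • w = c 3 • v + (c 3 * t') • w := by
        rw [← lhs, rhs]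
      rw [sub_smul, sub_smul]
      linear_combination (norm := module) h'
    obtain ⟨e30, e31⟩ := hpair _ _ e3
    have hc03 : c 0 = c 3 := sub_eq_zero.mp e30
    have h31 : t * c 1 = c 3 * t' := sub_eq_zero.mp e31
    -- c 0 ≠ 0
    have hc0ne : c 0 ≠ 0 := by
      intro h
      apply hv0
      have : (g : V →ₗ[K] V) v = 0 := by rw [k0, h, zero_smul]
      have := g.injective (by simpa using this : g v = g 0)
      exact this
    -- conclude
    have hc1ne : c 1 ≠ 0 := by rw [hc12, ← hc02]; exact hc0ne
    have hfin : t * c 1 = t' * c 1 := by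
      rw [h31, ← hc03, hc02, ← hc12]; ring
    exact mul_right_cancel₀ hc1ne hfin
  exact Infinite.of_injective F hinj
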